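/- Suppose the SSC holds, fix u ∈ V, let ε = (1/2)·min{ dist(S_e(F_{t(e)}), S_f(F_{t(f)})) : e, f ∈ E_u¹, e ≠ f } > 0, and let q ∈ ℝ and r ∈ (0, ε). Then: (a) M_u^q(F_u, r) = ∑_{e∈E_u¹} M_u^q(S_e(F_{t(e)}), r); (b) for each e ∈ E_u¹, M_u^q(S_e(F_{t(e)}), r) = p_e^q · M_{t(e)}^q(F_{t(e)}, r_e^{−1} r); (c) hence M_u^q(F_u, r) = ∑_{e∈E_u¹} p_e^q · M_{t(e)}^q(F_{t(e)}, r_e^{−1} r). -/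

import Mathlib

open MeasureTheory Metric Set Filter Topology Asymptotics

noncomputable section

/-- Euclidean space `ℝ^m`. -/
abbrev Euc (m : ℕ) : Type := EuclideanSpace ℝ (Fin m)

/-- The topological support of a measure. -/
def mSupport {X : Type} [TopologicalSpace X] [MeasurableSpace X]
    (μ : Measure X) : Set X :=
  {x | ∀ U : Set X, IsOpen U → x ∈ U → 0 < μ U}

/-- The probability weight of a finite path (product of its edge weights). -/
def pathProb {E : Type} (w : E → ℝ) (p : List E) : ℝ := (p.map w).prod

/-- `f` is a subpath of `g`. -/
def IsSubpath {E : Type} (f g : List E) : Prop := ∃ s t : List E, g = s ++ f ++ t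

/-- The distance between two sets. -/
def setDist {X : Type} [PseudoMetricSpace X] (A B : Set X) : ℝ :=
  sInf (Set.image2 dist A B)

/-- The `q`-th packing moment `M_u^q(A,r)` of a measure `μ` on `A` at scale `r`:
the supremum of `∑_{x∈D} μ(B̄(x,r))^q` over `r`-separated finite subsets `D ⊆ A`. -/
def packMoment {m : ℕ} (μ : Measure (Euc m)) (q : ℝ) (A : Set (Euc m)) (r : ℝ) : ℝ :=
  sSup {s : ℝ | ∃ D : Finset (Euc m), ↑D ⊆ A ∧
    (∀ x ∈ D, ∀ y ∈ D, x ≠ y → 2 * r < dist x y) ∧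
    s = ∑ x ∈ D, (μ (Metric.closedBall x r)).toReal ^ q}

/-- The spectral radius of a real square matrix (via its complex spectrum). -/
def specRad {n : Type} [Fintype n] [DecidableEq n] (M : Matrix n n ℝ) : ENNReal :=
  spectralRadius ℂ (M.map (algebraMap ℝ ℂ))

/-- A matrix is irreducible if some power has a positive `ij` entry, for every `i j`. -/
def MatIrreducible {n : Type} [Fintype n] [DecidableEq n] (M : Matrix n n ℝ) : Prop :=
  ∀ i j : n, ∃ k : ℕ, 0 < (M ^ k) i j

/-- A self-similar directed-graph IFS on `ℝ^m`: a finite strongly connected directed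
multigraph with at least two edges out of each vertex, each edge carrying a contracting
similarity of `ℝ^m`. -/
structure GIFS (m : ℕ) (V E : Type) [Fintype V] [Fintype E] where
  src : E → V
  dst : E → V
  ratio : E → ℝ
  ratio_pos : ∀ e, 0 < ratio e
  ratio_lt_one : ∀ e, ratio e < 1
  map : E → Euc m → Euc m
  map_similarity : ∀ e x y, dist (map e x) (map e y) = ratio e * dist x y
  two_edges : ∀ u : V, ∃ e f : E, e ≠ f ∧ src e = u ∧ src f = u
  strongly_connected : ∀ u v : V, ∃ p : List E, p ≠ [] ∧
    p.Chain' (fun a b => dst a = src b) ∧ p.head?.map src = some u ∧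
    p.getLast?.map dst = some v

namespace GIFS

variable {m : ℕ} {V E : Type} [Fintype V] [Fintype E] (G : GIFS m V E)

/-- `p` is a directed path (consecutive edges match up). -/
def IsPath (p : List E) : Prop := p.Chain' (fun a b => G.dst a = G.src b)

/-- `p` is a nonempty directed path from `u` to `v`. -/
def IsPathFrom (u v : V) (p : List E) : Prop :=
  p ≠ [] ∧ G.IsPath p ∧ p.head?.map G.src = some u ∧ p.getLast?.map G.dst = some v

/-- The contraction `S_{e₁} ∘ ⋯ ∘ S_{e_k}` along a path. -/
def pathMap (p : List E) : Euc m → Euc m := p.foldr (fun e f => G.map e ∘ f) id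

/-- The contraction ratio along a path. -/
def pathRatio (p : List E) : ℝ := (p.map G.ratio).prod

/-- The terminal vertex of a path (with default `u` for the empty path). -/
def pathDst (u : V) (p : List E) : V := (p.getLast?.map G.dst).getD u

/-- `(F u)_{u ∈ V}` is the attractor: the unique list of nonempty compact sets with
`F u = ⋃_{e ∈ E_u¹} S_e(F_{t(e)})`. -/
def IsAttractor (F : V → Set (Euc m)) : Prop :=
  (∀ u, (F u).Nonempty) ∧ (∀ u, IsCompact (F u)) ∧
  (∀ u, F u = ⋃ e ∈ {e : E | G.src e = u}, G.map e '' F (G.dst e))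

/-- Probability weights on the edges: each in `(0,1)`, summing to `1` at each vertex. -/
def IsProbWeights (w : E → ℝ) : Prop :=
  (∀ e, w e ∈ Set.Ioo (0 : ℝ) 1) ∧
  (∀ u : V, ∑ e : E, Set.indicator {e : E | G.src e = u} w e = 1)

/-- `(μ u)_{u ∈ V}` are the self-similar measures: Borel probability measures with
`μ_u(A) = ∑_{e ∈ E_u¹} p_e μ_{t(e)}(S_e⁻¹(A))` and `supp μ_u = F u`. -/
def IsSelfSimilarMeasures (w : E → ℝ) (F : V → Set (Euc m)) (μ : V → Measure (Euc m)) : Prop :=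
  (∀ u, IsProbabilityMeasure (μ u)) ∧
  (∀ u (A : Set (Euc m)), MeasurableSet A →
    μ u A = ∑ e : E, Set.indicator {e : E | G.src e = u}
      (fun e => ENNReal.ofReal (w e) * μ (G.dst e) (G.map e ⁻¹' A)) e) ∧
  (∀ u, mSupport (μ u) = F u)

/-- The strong separation condition. -/
def SSC (F : V → Set (Euc m)) : Prop :=
  ∀ u : V, ∀ e f : E, G.src e = u → G.src f = u → e ≠ f →
    (G.map e '' F (G.dst e)) ∩ (G.map f '' F (G.dst f)) = ∅

/-- The open set condition with open sets `U`. -/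
def OSCWith (U : V → Set (Euc m)) : Prop :=
  (∀ u, (U u).Nonempty ∧ IsOpen (U u) ∧ Bornology.IsBounded (U u)) ∧
  (∀ e : E, G.map e '' U (G.dst e) ⊆ U (G.src e)) ∧
  (∀ u : V, ∀ e f : E, G.src e = u → G.src f = u → e ≠ f →
    (G.map e '' U (G.dst e)) ∩ (G.map f '' U (G.dst f)) = ∅)

/-- The open set condition. -/
def OSC : Prop := ∃ U : V → Set (Euc m), G.OSCWith U

variable [DecidableEq V]

/-- The matrix `A(q,β)` with `uv` entry `∑_{e ∈ E¹_{uv}} p_e^q r_e^β`. -/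
def matA (w : E → ℝ) (q β : ℝ) : Matrix V V ℝ :=
  Matrix.of fun u v => ∑ e : E,
    Set.indicator {e : E | G.src e = u ∧ G.dst e = v}
      (fun e => w e ^ q * G.ratio e ^ β) e

/-- The matrix `B(q,γ,l)` with `uv` entry `∑_{e ∈ E^l_{uv}, e ≠ l_u} p_e^q r_e^γ`. -/
def matB (w : E → ℝ) (q γ : ℝ) (l : ℕ) (lu : V → List E) : Matrix V V ℝ :=
  Matrix.of fun u v => ∑ p : List.Vector E l,
    Set.indicator {p : List.Vector E l | G.IsPathFrom u v p.toList ∧ p.toList ≠ lu u}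
      (fun p => pathProb w p.toList ^ q * G.pathRatio p.toList ^ γ) p

/-- The matrix of measures `P` with `uv` entry `∑_{e ∈ E¹_{uv}} p_e^q r_e^{β} δ_{ln(1/r_e)}`. -/
def matP (w : E → ℝ) (q β : ℝ) : V → V → Measure ℝ :=
  fun u v => ∑ e : E,
    (Set.indicator {e : E | G.src e = u ∧ G.dst e = v}
      (fun e => ENNReal.ofReal (w e ^ q * G.ratio e ^ β)) e) •
      Measure.dirac (Real.log ((G.ratio e)⁻¹))

end GIFS

/-- `P` is a lattice matrix of measures with span `lam`. -/
def IsLatticeMatrix {V : Type} (P : V → V → MeasureTheory.Measure ℝ) (lam : ℝ) : Prop :=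
  0 < lam ∧
  ∃ (L : V → V → ℝ) (b : V → V → ℝ),
    (∀ u v : V, 0 < L u v) ∧
    -- (a) each diagonal support generates the group `L u u • ℤ`
    (∀ u : V, AddSubgroup.closure (mSupport (P u u)) = AddSubgroup.zmultiples (L u u)) ∧
    -- (b) off-diagonal supports lie in `b u v + L u v • ℤ`, with `L u v` maximal
    (∀ u v : V, u ≠ v →
      (mSupport (P u v) ⊆ {x : ℝ | ∃ n : ℤ, x = b u v + n * L u v}) ∧
      (∀ L' : ℝ, 0 < L' →
        (∃ b' : ℝ, mSupport (P u v) ⊆ {x : ℝ | ∃ n : ℤ, x = b' + n * L'}) → L' ≤ L u v)) ∧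
    -- (c) the numbers `L u v` generate the group `lam • ℤ`
    (AddSubgroup.closure {x : ℝ | ∃ u v : V, x = L u v} = AddSubgroup.zmultiples lam) ∧
    -- (d) `supp P_uv + supp P_vw − supp P_uw ⊆ lam • ℤ`
    (∀ u v z : V, ∀ a ∈ mSupport (P u v), ∀ a' ∈ mSupport (P v z), ∀ a'' ∈ mSupport (P u z),
      ∃ n : ℤ, a + a' - a'' = n * lam)

lemma mSupport_compl_null {X : Type} [TopologicalSpace X] [MeasurableSpace X]
    [SecondCountableTopology X] (μ : Measure X) : μ (mSupport μ)ᶜ = 0 := by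
  have h1 : (mSupport μ)ᶜ = ⋃₀ {U : Set X | IsOpen U ∧ μ U = 0} := by
    ext x
    simp only [mSupport, Set.mem_compl_iff, Set.mem_setOf_eq, Set.mem_sUnion]
    constructor
    · intro h
      push_neg at h
      obtain ⟨U, hU, hxU, hμU⟩ := h
      exact ⟨U, ⟨hU, by simpa [pos_iff_ne_zero] using hμU⟩, hxU⟩
    · rintro ⟨U, ⟨hU, hμU⟩, hxU⟩ h
      have := h U hU hxU
      simp [hμU] at this
  obtain ⟨T, hTc, hTsub, hTU⟩ :=
    TopologicalSpace.isOpen_sUnion_countable {U : Set X | IsOpen U ∧ μ U = 0} (fun s hs => hs.1)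
  rw [h1, ← hTU]
  exact (measure_sUnion_null_iff hTc).2 fun s hs => (hTsub hs).2

lemma null_of_disj_mSupport {X : Type} [TopologicalSpace X] [MeasurableSpace X]
    [SecondCountableTopology X] (μ : Measure X) (B : Set X)
    (h : ∀ x ∈ B, x ∉ mSupport μ) : μ B = 0 :=
  measure_mono_null (fun x hx => h x hx) (mSupport_compl_null μ)

lemma exists_lb {m : ℕ} (μ : Measure (Euc m)) [IsFiniteMeasure μ] (K : Set (Euc m))
    (hK : IsCompact K) (hne : K.Nonempty) (hsupp : ∀ x ∈ K, x ∈ mSupport μ)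
    (s : ℝ) (hs : 0 < s) :
    ∃ c : ℝ, 0 < c ∧ ∀ x ∈ K, ENNReal.ofReal c ≤ μ (Metric.closedBall x s) := by
  have hcov : K ⊆ ⋃ x : K, Metric.ball (x : Euc m) (s / 2) := fun x hx =>
    Set.mem_iUnion.2 ⟨⟨x, hx⟩, Metric.mem_ball_self (by linarith)⟩
  obtain ⟨t, ht⟩ := hK.elim_finite_subcover (fun x : K => Metric.ball (x : Euc m) (s / 2))
    (fun _ => Metric.isOpen_ball) hcov
  obtain ⟨x₀, hx₀⟩ := hne
  have htne : t.Nonempty := by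
    obtain ⟨i, hi, _⟩ := Set.mem_iUnion₂.1 (ht hx₀)
    exact ⟨i, hi⟩
  refine ⟨t.inf' htne fun i => (μ (Metric.ball (i : Euc m) (s / 2))).toReal, ?_, ?_⟩
  · rw [Finset.lt_inf'_iff]
    intro i hi
    refine ENNReal.toReal_pos ?_ (measure_ne_top _ _)
    exact (hsupp i i.2 (Metric.ball (i : Euc m) (s/2)) Metric.isOpen_ball
      (Metric.mem_ball_self (by linarith))).ne'
  · intro x hx
    obtain ⟨i, hit, hxi⟩ := Set.mem_iUnion₂.1 (ht hx)
    calc ENNReal.ofReal (t.inf' htne fun i => (μ (Metric.ball (i:Euc m) (s/2))).toReal)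
        ≤ ENNReal.ofReal (μ (Metric.ball (i:Euc m) (s/2))).toReal :=
          ENNReal.ofReal_le_ofReal (Finset.inf'_le _ hit)
      _ = μ (Metric.ball (i:Euc m) (s/2)) := ENNReal.ofReal_toReal (measure_ne_top _ _)
      _ ≤ μ (Metric.closedBall x s) := measure_mono (fun y hy => by
          simp only [Metric.mem_ball] at hy hxi
          simp only [Metric.mem_closedBall]
          have h1 := dist_triangle y (i:Euc m) x
          have h2 : dist (i:Euc m) x = dist x (i:Euc m) := dist_comm _ _
          linarith)

def PMset {m : ℕ} (μ : Measure (Euc m)) (q : ℝ) (A : Set (Euc m)) (r : ℝ) : Set ℝ :=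
  {s : ℝ | ∃ D : Finset (Euc m), ↑D ⊆ A ∧
    (∀ x ∈ D, ∀ y ∈ D, x ≠ y → 2 * r < dist x y) ∧
    s = ∑ x ∈ D, (μ (Metric.closedBall x r)).toReal ^ q}

lemma zero_mem_PMset {m : ℕ} (μ : Measure (Euc m)) (q : ℝ) (A : Set (Euc m)) (r : ℝ) :
    (0 : ℝ) ∈ PMset μ q A r :=
  ⟨∅, by simp, by simp, by simp⟩

lemma PMset_bddAbove {m : ℕ} (μ : Measure (Euc m)) [IsProbabilityMeasure μ] (q : ℝ)
    (A : Set (Euc m)) (r : ℝ) (hr : 0 < r) (c : ℝ) (hc : 0 < c)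
    (hA : ∀ x ∈ A, ENNReal.ofReal c ≤ μ (Metric.closedBall x r)) :
    BddAbove (PMset μ q A r) := by
  refine ⟨(1 / c) * max 1 (c ^ q), ?_⟩
  rintro s ⟨D, hD, hsep, rfl⟩
  have hdisj : (↑D : Set (Euc m)).PairwiseDisjoint fun x => Metric.closedBall x r := by
    intro x hx y hy hxy
    exact Metric.closedBall_disjoint_closedBall (by linarith [hsep x hx y hy hxy])
  have hsum : ∑ x ∈ D, μ (Metric.closedBall x r) ≤ 1 := by
    rw [← measure_biUnion_finset hdisj (fun _ _ => measurableSet_closedBall)]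
    exact prob_le_one
  have hcard : (D.card : ℝ) * c ≤ 1 := by
    have h1 : (D.card : ENNReal) * ENNReal.ofReal c ≤ 1 := by
      calc (D.card : ENNReal) * ENNReal.ofReal c = ∑ _x ∈ D, ENNReal.ofReal c := by
            rw [Finset.sum_const, nsmul_eq_mul]
        _ ≤ ∑ x ∈ D, μ (Metric.closedBall x r) :=
            Finset.sum_le_sum fun x hx => hA x (hD hx)
        _ ≤ 1 := hsum
    have h2 := ENNReal.toReal_mono (by simp) h1
    simpa [ENNReal.toReal_ofReal hc.le] using h2
  have hterm : ∀ x ∈ D, (μ (Metric.closedBall x r)).toReal ^ q ≤ max 1 (c ^ q) := by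
    intro x hx
    have hle1 : (μ (Metric.closedBall x r)).toReal ≤ 1 := by
      have := prob_le_one (μ := μ) (s := Metric.closedBall x r)
      simpa using ENNReal.toReal_mono ENNReal.one_ne_top this
    have hgec : c ≤ (μ (Metric.closedBall x r)).toReal := by
      have := ENNReal.toReal_mono (measure_ne_top _ _) (hA x (hD hx))
      rwa [ENNReal.toReal_ofReal hc.le] at this
    rcases le_or_gt 0 q with hq | hq
    · exact le_max_of_le_left (Real.rpow_le_one ENNReal.toReal_nonneg hle1 hq)
    · exact le_max_of_le_right (Real.rpow_le_rpow_of_nonpos hc hgec hq.le)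
  calc ∑ x ∈ D, (μ (Metric.closedBall x r)).toReal ^ q
      ≤ ∑ _x ∈ D, max 1 (c ^ q) := Finset.sum_le_sum hterm
    _ = (D.card : ℝ) * max 1 (c ^ q) := by rw [Finset.sum_const, nsmul_eq_mul]
    _ ≤ (1 / c) * max 1 (c ^ q) :=
        mul_le_mul_of_nonneg_right ((le_div_iff₀ hc).2 hcard)
          (le_trans zero_le_one (le_max_left _ _))

lemma packMoment_def {m : ℕ} (μ : Measure (Euc m)) (q : ℝ) (A : Set (Euc m)) (r : ℝ) :
    packMoment μ q A r = sSup (PMset μ q A r) := rfl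

/-- **Lemma 3.1.** Under the SSC, fix `u ∈ V` and let
`ε = (1/2)·min{dist(S_e(F_{t(e)}), S_f(F_{t(f)})) : e ≠ f ∈ E_u¹}`. For every `q ∈ ℝ`
and `r ∈ (0,ε)`:
(a) `M_u^q(F_u,r) = ∑_{e∈E_u¹} M_u^q(S_e(F_{t(e)}),r)`;
(b) `M_u^q(S_e(F_{t(e)}),r) = p_e^q · M_{t(e)}^q(F_{t(e)}, r_e⁻¹ r)` for each `e ∈ E_u¹`;
(c) `M_u^q(F_u,r) = ∑_{e∈E_u¹} p_e^q · M_{t(e)}^q(F_{t(e)}, r_e⁻¹ r)`. -/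
theorem statement12
    {m : ℕ} (hm : 1 ≤ m) {V E : Type} [Fintype V] [Fintype E]
    [DecidableEq V] [DecidableEq E]
    (G : GIFS m V E) (w : E → ℝ) (hw : G.IsProbWeights w)
    (F : V → Set (Euc m)) (hF : G.IsAttractor F)
    (μ : V → Measure (Euc m)) (hμ : G.IsSelfSimilarMeasures w F μ)
    (hSSC : G.SSC F)
    (u : V) (ε : ℝ)
    (hε : ε = (1 / 2) * sInf {d : ℝ | ∃ e f : E, G.src e = u ∧ G.src f = u ∧ e ≠ f ∧
      d = setDist (G.map e '' F (G.dst e)) (G.map f '' F (G.dst f))})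
    (q : ℝ) (r : ℝ) (hr : r ∈ Set.Ioo 0 ε) :
    packMoment (μ u) q (F u) r =
      ∑ e ∈ Finset.univ.filter (fun e : E => G.src e = u),
        packMoment (μ u) q (G.map e '' F (G.dst e)) r ∧
    (∀ e : E, G.src e = u →
      packMoment (μ u) q (G.map e '' F (G.dst e)) r =
        w e ^ q * packMoment (μ (G.dst e)) q (F (G.dst e)) ((G.ratio e)⁻¹ * r)) ∧
    packMoment (μ u) q (F u) r =
      ∑ e ∈ Finset.univ.filter (fun e : E => G.src e = u),
        w e ^ q * packMoment (μ (G.dst e)) q (F (G.dst e)) ((G.ratio e)⁻¹ * r) := by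
  classical
  obtain ⟨hr0, hrε⟩ := hr
  have hε0 : 0 < ε := lt_trans hr0 hrε
  obtain ⟨hFne, hFcomp, hFeq⟩ := hF
  obtain ⟨hprob, hrel, hsupp⟩ := hμ
  haveI : ∀ v, IsProbabilityMeasure (μ v) := hprob
  set piece : E → Set (Euc m) := fun e => G.map e '' F (G.dst e) with hpieceDef
  set Eu : Finset E := Finset.univ.filter (fun e : E => G.src e = u) with hEuDef
  -- basic separation facts
  have himg2lb : ∀ (A B : Set (Euc m)), ∀ z ∈ Set.image2 dist A B, (0:ℝ) ≤ z := by
    rintro A B z ⟨a, ha, b, hb, rfl⟩; exact dist_nonneg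
  have hsep : ∀ e f : E, G.src e = u → G.src f = u → e ≠ f →
      ∀ x ∈ piece e, ∀ y ∈ piece f, 2 * ε ≤ dist x y := by
    intro e f he hf hef x hx y hy
    have hSne : setDist (piece e) (piece f) ∈
        {d : ℝ | ∃ e f : E, G.src e = u ∧ G.src f = u ∧ e ≠ f ∧
          d = setDist (piece e) (piece f)} := ⟨e, f, he, hf, hef, rfl⟩
    have hSlb : ∀ d ∈ {d : ℝ | ∃ e f : E, G.src e = u ∧ G.src f = u ∧ e ≠ f ∧
        d = setDist (piece e) (piece f)}, (0:ℝ) ≤ d := by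
      rintro d ⟨e', f', _, _, _, rfl⟩
      exact Real.sInf_nonneg (himg2lb _ _)
    have h2ε := csInf_le ⟨0, hSlb⟩ hSne
    have hle : setDist (piece e) (piece f) ≤ dist x y :=
      csInf_le ⟨0, himg2lb _ _⟩ (Set.mem_image2_of_mem hx hy)
    rw [hε] at *
    linarith
  have hdisjP : ∀ e f : E, G.src e = u → G.src f = u → e ≠ f →
      ∀ x, x ∈ piece e → x ∉ piece f := by
    intro e f he hf hef x hxe hxf
    have := hSSC u e f he hf hef
    have hx : x ∈ piece e ∩ piece f := ⟨hxe, hxf⟩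
    rw [this] at hx
    exact hx
  have hsuppF : ∀ v : V, ∀ x ∈ F v, x ∈ mSupport (μ v) := by
    intro v x hx; rw [hsupp v]; exact hx
  have bddF : ∀ (v : V) (A : Set (Euc m)) (s : ℝ), 0 < s → A ⊆ F v →
      BddAbove (PMset (μ v) q A s) := by
    intro v A s hs hA
    obtain ⟨c, hc, hcb⟩ := exists_lb (μ v) (F v) (hFcomp v) (hFne v) (hsuppF v) s hs
    exact PMset_bddAbove (μ v) q A s hs c hc (fun x hx => hcb x (hA hx))
  have piece_sub : ∀ e : E, G.src e = u → piece e ⊆ F u := by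
    intro e he x hx
    rw [hFeq u]
    exact Set.mem_biUnion he hx
  -- Part (b)
  have hb : ∀ e : E, G.src e = u →
      packMoment (μ u) q (piece e) r =
        w e ^ q * packMoment (μ (G.dst e)) q (F (G.dst e)) ((G.ratio e)⁻¹ * r) := by
    intro e he
    set v := G.dst e with hv
    set r' : ℝ := (G.ratio e)⁻¹ * r with hr'Def
    have hre : (0:ℝ) < G.ratio e := G.ratio_pos e
    have hr' : 0 < r' := mul_pos (inv_pos.2 hre) hr0
    have hpe : (0:ℝ) < w e := (hw.1 e).1
    have hset : ∀ x : Euc m, G.map e ⁻¹' Metric.closedBall (G.map e x) r = Metric.closedBall x r' := by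
      intro x
      ext y
      simp only [Set.mem_preimage, Metric.mem_closedBall, G.map_similarity]
      rw [hr'Def, inv_mul_eq_div, le_div_iff₀ hre, mul_comm]
    have hmeas : ∀ x ∈ F v, μ u (Metric.closedBall (G.map e x) r)
        = ENNReal.ofReal (w e) * μ v (Metric.closedBall x r') := by
      intro x hx
      rw [hrel u (Metric.closedBall (G.map e x) r) measurableSet_closedBall]
      rw [Finset.sum_eq_single_of_mem e (Finset.mem_univ e) ?others]
      case others =>
        intro f _ hfe
        by_cases hf : G.src f = u
        · rw [Set.indicator_of_mem (show f ∈ {e' : E | G.src e' = u} from hf)]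
          have hzero : μ (G.dst f) (G.map f ⁻¹' Metric.closedBall (G.map e x) r) = 0 := by
            apply null_of_disj_mSupport
            intro y hy hymem
            have hyF : y ∈ F (G.dst f) := by rw [← hsupp (G.dst f)]; exact hymem
            have h1 : G.map f y ∈ piece f := Set.mem_image_of_mem _ hyF
            have h2 : G.map e x ∈ piece e := Set.mem_image_of_mem _ hx
            have h3 := hsep f e hf he hfe _ h1 _ h2
            have hd : dist (G.map f y) (G.map e x) ≤ r := hy
            linarith
          rw [hzero, mul_zero]
        · exact Set.indicator_of_notMem (show f ∉ {e' : E | G.src e' = u} from hf) _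
      rw [Set.indicator_of_mem (show e ∈ {e' : E | G.src e' = u} from he)]
      rw [hset x]
    have hterm : ∀ x ∈ F v, (μ u (Metric.closedBall (G.map e x) r)).toReal ^ q
        = w e ^ q * ((μ v (Metric.closedBall x r')).toReal) ^ q := by
      intro x hx
      rw [hmeas x hx, ENNReal.toReal_mul, ENNReal.toReal_ofReal hpe.le,
        Real.mul_rpow hpe.le ENNReal.toReal_nonneg]
    have hmapinj : ∀ x y : Euc m, G.map e x = G.map e y → x = y := by
      intro x y hxy
      have := G.map_similarity e x y
      rw [hxy, dist_self] at this
      have : dist x y = 0 := by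
        have := this.symm
        nlinarith [dist_nonneg (x := x) (y := y)]
      exact dist_eq_zero.1 this
    have hsetEq : PMset (μ u) q (piece e) r
        = (fun t => w e ^ q * t) '' PMset (μ v) q (F v) r' := by
      ext s
      constructor
      · rintro ⟨D, hD, hDsep, rfl⟩
        set g := Function.invFunOn (G.map e) (F v) with hg
        have hgx : ∀ x ∈ D, G.map e (g x) = x ∧ g x ∈ F v := by
          intro x hx
          obtain ⟨y, hy, hyx⟩ := hD hx
          exact ⟨Function.invFunOn_eq ⟨y, hy, hyx⟩, Function.invFunOn_mem ⟨y, hy, hyx⟩⟩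
        have hginj : ∀ x ∈ D, ∀ y ∈ D, g x = g y → x = y := by
          intro x hx y hy hxy
          rw [← (hgx x hx).1, ← (hgx y hy).1, hxy]
        refine ⟨∑ x ∈ D, ((μ v) (Metric.closedBall (g x) r')).toReal ^ q,
          ⟨D.image g, ?_, ?_, ?_⟩, ?_⟩
        · intro y hy
          simp only [Finset.coe_image, Set.mem_image, Finset.mem_coe] at hy
          obtain ⟨x, hx, rfl⟩ := hy
          exact (hgx x hx).2
        · intro a ha b hb hab
          rw [Finset.mem_image] at ha hb
          obtain ⟨x, hx, rfl⟩ := ha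
          obtain ⟨y, hy, rfl⟩ := hb
          have hxy : x ≠ y := fun h => hab (by rw [h])
          have hreld : 2 * r < G.ratio e * dist (g x) (g y) := by
            rw [← G.map_similarity, (hgx x hx).1, (hgx y hy).1]
            exact hDsep x hx y hy hxy
          calc 2 * r' = (G.ratio e)⁻¹ * (2 * r) := by rw [hr'Def]; ring
            _ < (G.ratio e)⁻¹ * (G.ratio e * dist (g x) (g y)) :=
                (mul_lt_mul_iff_right₀ (inv_pos.2 hre)).2 hreld
            _ = dist (g x) (g y) := inv_mul_cancel_left₀ hre.ne' _
        · rw [Finset.sum_image hginj]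
        · show w e ^ q * (∑ x ∈ D, ((μ v) (Metric.closedBall (g x) r')).toReal ^ q)
            = ∑ x ∈ D, ((μ u) (Metric.closedBall x r)).toReal ^ q
          rw [Finset.mul_sum]
          apply Finset.sum_congr rfl
          intro x hx
          have h1 := hterm (g x) (hgx x hx).2
          rw [(hgx x hx).1] at h1
          exact h1.symm
      · rintro ⟨t, ⟨D', hD', hD'sep, rfl⟩, rfl⟩
        refine ⟨D'.image (G.map e), ?_, ?_, ?_⟩
        · intro y hy
          simp only [Finset.coe_image, Set.mem_image, Finset.mem_coe] at hy
          obtain ⟨x, hx, rfl⟩ := hy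
          exact Set.mem_image_of_mem _ (hD' hx)
        · intro a ha b hb hab
          rw [Finset.mem_image] at ha hb
          obtain ⟨x, hx, rfl⟩ := ha
          obtain ⟨y, hy, rfl⟩ := hb
          have hxy : x ≠ y := fun h => hab (by rw [h])
          have hd := hD'sep x hx y hy hxy
          rw [G.map_similarity]
          calc 2 * r = G.ratio e * (2 * r') := by rw [hr'Def]; field_simp
            _ < G.ratio e * dist x y := (mul_lt_mul_iff_right₀ hre).2 hd
        · show w e ^ q * (∑ x ∈ D', ((μ v) (Metric.closedBall x r')).toReal ^ q)
            = ∑ x ∈ Finset.image (G.map e) D', ((μ u) (Metric.closedBall x r)).toReal ^ q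
          rw [Finset.sum_image (fun x _ y _ h => hmapinj x y h), Finset.mul_sum]
          apply Finset.sum_congr rfl
          intro x hx
          exact (hterm x (hD' hx)).symm
    have hbdd' : BddAbove (PMset (μ v) q (F v) r') := bddF v _ r' hr' subset_rfl
    have hne' : (PMset (μ v) q (F v) r').Nonempty := ⟨0, zero_mem_PMset _ _ _ _⟩
    have hmono : Monotone fun t : ℝ => w e ^ q * t := fun a b hab =>
      mul_le_mul_of_nonneg_left hab (Real.rpow_nonneg hpe.le q)
    have hcs := hmono.map_csSup_of_continuousAt
      ((by fun_prop : Continuous fun t : ℝ => w e ^ q * t).continuousAt) hne' hbdd'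
    rw [packMoment_def, packMoment_def, hsetEq, ← hcs]
  -- Part (a)
  have ha : packMoment (μ u) q (F u) r = ∑ e ∈ Eu, packMoment (μ u) q (piece e) r := by
    haveI : Nonempty E := ⟨(G.two_edges u).choose⟩
    apply le_antisymm
    · rw [packMoment_def]
      apply csSup_le ⟨0, zero_mem_PMset _ _ _ _⟩
      rintro s ⟨D, hD, hDsep, rfl⟩
      have hgex : ∀ x ∈ (↑D : Set (Euc m)), ∃ e : E, G.src e = u ∧ x ∈ piece e := by
        intro x hx
        have hx2 := hD hx
        rw [hFeq u] at hx2
        obtain ⟨e, he, hxe⟩ := Set.mem_iUnion₂.1 hx2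
        exact ⟨e, he, hxe⟩
      choose! g hg1 hg2 using hgex
      have hmaps : ∀ x ∈ D, g x ∈ Eu := by
        intro x hx
        rw [hEuDef, Finset.mem_filter]
        exact ⟨Finset.mem_univ _, hg1 x hx⟩
      rw [← Finset.sum_fiberwise_of_maps_to hmaps
        (fun x => ((μ u) (Metric.closedBall x r)).toReal ^ q)]
      apply Finset.sum_le_sum
      intro e he
      have heu : G.src e = u := by
        rw [hEuDef, Finset.mem_filter] at he
        exact he.2
      rw [packMoment_def]
      apply le_csSup (bddF u _ r hr0 (piece_sub e heu))
      refine ⟨D.filter (fun x => g x = e), ?_, ?_, rfl⟩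
      · intro x hx
        simp only [Finset.coe_filter, Set.mem_setOf_eq] at hx
        have := hg2 x hx.1
        rwa [hx.2] at this
      · intro x hx y hy hxy
        rw [Finset.mem_filter] at hx hy
        exact hDsep x hx.1 y hy.1 hxy
    · by_contra hlt
      push_neg at hlt
      set M := packMoment (μ u) q (F u) r with hM
      set δ : ℝ := (∑ e ∈ Eu, packMoment (μ u) q (piece e) r) - M with hδ
      have hδpos : 0 < δ := by rw [hδ]; linarith
      set δ' : ℝ := δ / ((Eu.card : ℝ) + 1) with hδ'
      have hδ'pos : 0 < δ' := div_pos hδpos (Nat.cast_add_one_pos _)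
      have key : ∀ e : E, ∃ Dset : Finset (Euc m), ↑Dset ⊆ piece e ∧
          (∀ x ∈ Dset, ∀ y ∈ Dset, x ≠ y → 2 * r < dist x y) ∧
          (e ∈ Eu → packMoment (μ u) q (piece e) r - δ' ≤
            ∑ x ∈ Dset, ((μ u) (Metric.closedBall x r)).toReal ^ q) := by
        intro e
        by_cases he : e ∈ Eu
        · have hlt' : packMoment (μ u) q (piece e) r - δ'
              < sSup (PMset (μ u) q (piece e) r) := by
            rw [← packMoment_def]
            linarith
          obtain ⟨s, ⟨Dset, h1, h2, rfl⟩, h3⟩ :=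
            exists_lt_of_lt_csSup ⟨0, zero_mem_PMset _ _ _ _⟩ hlt'
          exact ⟨Dset, h1, h2, fun _ => h3.le⟩
        · exact ⟨∅, by simp, by simp, fun h => absurd h he⟩
      choose Ds hDs1 hDs2 hDs3 using key
      have hsrcEu : ∀ e ∈ Eu, G.src e = u := by
        intro e he
        rw [hEuDef, Finset.mem_filter] at he
        exact he.2
      have hpair : (↑Eu : Set E).PairwiseDisjoint Ds := by
        intro e he f hf hef
        apply Finset.disjoint_left.2
        intro x hxe hxf
        exact hdisjP e f (hsrcEu e he) (hsrcEu f hf) hef x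
          (hDs1 e hxe) (hDs1 f hxf)
      set D : Finset (Euc m) := Eu.biUnion Ds with hD
      have hDsub : ↑D ⊆ F u := by
        intro x hx
        rw [hD] at hx
        simp only [Finset.coe_biUnion, Set.mem_iUnion, Finset.mem_coe] at hx
        obtain ⟨e, he, hxe⟩ := hx
        exact piece_sub e (hsrcEu e he) (hDs1 e hxe)
      have hDsep : ∀ x ∈ D, ∀ y ∈ D, x ≠ y → 2 * r < dist x y := by
        intro x hx y hy hxy
        rw [hD, Finset.mem_biUnion] at hx hy
        obtain ⟨e, he, hxe⟩ := hx
        obtain ⟨f, hf, hyf⟩ := hy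
        by_cases hef : e = f
        · subst hef
          exact hDs2 e x hxe y hyf hxy
        · have := hsep e f (hsrcEu e he) (hsrcEu f hf) hef x
            (hDs1 e hxe) y (hDs1 f hyf)
          linarith
      have hDmem : (∑ x ∈ D, ((μ u) (Metric.closedBall x r)).toReal ^ q)
          ∈ PMset (μ u) q (F u) r := ⟨D, hDsub, hDsep, rfl⟩
      have hMle : ∑ x ∈ D, ((μ u) (Metric.closedBall x r)).toReal ^ q ≤ M := by
        rw [hM, packMoment_def]
        exact le_csSup (bddF u _ r hr0 subset_rfl) hDmem
      have hsumeq : ∑ x ∈ D, ((μ u) (Metric.closedBall x r)).toReal ^ q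
          = ∑ e ∈ Eu, ∑ x ∈ Ds e, ((μ u) (Metric.closedBall x r)).toReal ^ q := by
        rw [hD]
        exact Finset.sum_biUnion hpair
      have hbig : ∑ e ∈ Eu, packMoment (μ u) q (piece e) r
          ≤ (∑ e ∈ Eu, ∑ x ∈ Ds e, ((μ u) (Metric.closedBall x r)).toReal ^ q)
            + (Eu.card : ℝ) * δ' := by
        calc ∑ e ∈ Eu, packMoment (μ u) q (piece e) r
            ≤ ∑ e ∈ Eu, ((∑ x ∈ Ds e, ((μ u) (Metric.closedBall x r)).toReal ^ q) + δ') :=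
              Finset.sum_le_sum fun e he => by linarith [hDs3 e he]
          _ = _ := by rw [Finset.sum_add_distrib, Finset.sum_const, nsmul_eq_mul]
      have hnδ : (Eu.card : ℝ) * δ' < δ := by
        rw [hδ', mul_div_assoc', div_lt_iff₀ (Nat.cast_add_one_pos _)]
        nlinarith [hδpos]
      rw [← hsumeq] at hbig
      have : ∑ e ∈ Eu, packMoment (μ u) q (piece e) r < M + δ := by linarith
      rw [hδ] at this
      linarith
  refine ⟨ha, hb, ?_⟩
  rw [ha]
  apply Finset.sum_congr rfl
  intro e he
  have heu : G.src e = u := by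
    rw [hEuDef, Finset.mem_filter] at he
    exact he.2
  exact hb e heu
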